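/- Let G : U →L[ℝ] Y and K : Y →L[ℝ] U with I - GK invertible, and α ∈ ℝ such that I - (1-α)GK is invertible. Then α·h_G(K) lies in the domain of h_G (i.e., I - G(α h_G(K)) is invertible), and h_G(α·h_G(K)) = α·K·(I - (1-α)GK)⁻¹. -/

import Mathlib

set_option synthInstance.maxHeartbeats 1000000
set_option maxHeartbeats 1000000

/-- If `I - GK` and `I - (1-α)GK` are invertible, then `α·h_G(K)` lies in the
domain of `h_G`, and `h_G(α·h_G(K)) = α·K·(I - (1-α)GK)⁻¹`. -/
theorem stmt_3 {U Y : Type*} [NormedAddCommGroup U] [NormedSpace ℝ U] [CompleteSpace U]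
    [NormedAddCommGroup Y] [NormedSpace ℝ Y] [CompleteSpace Y]
    (G : U →L[ℝ] Y) (K : Y →L[ℝ] U) (α : ℝ)
    (h : IsUnit (1 - G ∘L K)) (hα : IsUnit (1 - (1 - α) • (G ∘L K)))
    (hGK : Y →L[ℝ] U) (hdef : hGK = -(K ∘L Ring.inverse (1 - G ∘L K))) :
    IsUnit (1 - G ∘L (α • hGK)) ∧
      -((α • hGK) ∘L Ring.inverse (1 - G ∘L (α • hGK))) =
        α • (K ∘L Ring.inverse (1 - (1 - α) • (G ∘L K))) := by
  set A : Y →L[ℝ] Y := G ∘L K with hA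
  set r : Y →L[ℝ] Y := Ring.inverse (1 - A) with hrdef
  have hr1 : r * (1 - A) = 1 := Ring.inverse_mul_cancel _ h
  have hr2 : (1 - A) * r = 1 := Ring.mul_inverse_cancel _ h
  have hr2' : r - A * r = 1 := by rw [← hr2, sub_mul, one_mul]
  -- key algebraic identity
  have hcomp : G ∘L (α • hGK) = -(α • (A * r)) := by
    ext x
    simp [hdef, hA, hrdef, ContinuousLinearMap.mul_apply]
  have key : 1 - G ∘L (α • hGK) = (1 - (1 - α) • A) * r := by
    rw [hcomp, sub_neg_eq_add]
    have expand : (1 - (1 - α) • A) * r = r - (1 - α) • (A * r) := by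
      rw [sub_mul, one_mul, smul_mul_assoc]
    rw [expand, sub_smul, one_smul, ← hr2']
    abel
  have hru : IsUnit r := isUnit_ringInverse.mpr h
  have hunit : IsUnit (1 - G ∘L (α • hGK)) := key ▸ hα.mul hru
  refine ⟨hunit, ?_⟩
  set u : Y →L[ℝ] Y := 1 - G ∘L (α • hGK) with hu
  set v : Y →L[ℝ] Y := (1 - A) * Ring.inverse (1 - (1 - α) • A) with hv
  have huv : u * v = 1 := by
    rw [key, hv, mul_assoc, ← mul_assoc r, hr1, one_mul,
      Ring.mul_inverse_cancel _ hα]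
  have hinv : Ring.inverse u = v := by
    have h1 : Ring.inverse u * u = 1 := Ring.inverse_mul_cancel _ hunit
    calc Ring.inverse u = Ring.inverse u * (u * v) := by rw [huv, mul_one]
      _ = (Ring.inverse u * u) * v := by rw [mul_assoc]
      _ = v := by rw [h1, one_mul]
  have hrv : r ∘L v = Ring.inverse (1 - (1 - α) • A) := by
    show r * v = _
    rw [hv, ← mul_assoc, hr1, one_mul]
  rw [hinv, hdef, smul_neg, ContinuousLinearMap.neg_comp, neg_neg,
    ContinuousLinearMap.smul_comp, ContinuousLinearMap.comp_assoc, hrv]
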